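/- The n-qubit quantum Fourier transform matrix F_n satisfies the recursion F_n = H₁ · D_n · (I₂ ⊗ F_{n−1}) · Q_n, where H₁ = H ⊗ I^{⊗(n−1)}, D_n = diag(I^{⊗(n−1)}, Ω_{n−1}) with Ω_{n−1} = diag(1, ω_n, …, ω_n^{2^{n−1}−1}), ω_n = exp(2πi/2^n), and Q_n is the cyclic qubit permutation Q_n = χ_{n−1}^n ⋯ χ_2^n χ_1^n (products of SWAP gates). -/

import Mathlib

open Matrix Kronecker

/-- The `n`-qubit quantum Fourier transform: the `2^n × 2^n` matrix with
`(j, ℓ)` entry `ω_n^{jℓ} / √(2^n)`, `ω_n = exp(2πi/2^n)` (indices from `0`). -/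
noncomputable def qft (n : ℕ) : Matrix (Fin (2 ^ n)) (Fin (2 ^ n)) ℂ :=
  Matrix.of fun j l =>
    Complex.exp (2 * Real.pi * Complex.I * (j.val * l.val) / (2 ^ n)) / Real.sqrt (2 ^ n)

/-- The Hadamard gate `H = (1/√2)[[1,1],[1,−1]]`. -/
noncomputable def Hgate : Matrix (Fin 2) (Fin 2) ℂ :=
  ((Real.sqrt 2 : ℂ))⁻¹ • !![1, 1; 1, -1]

/-- `D_{n+1} = diag(I^{⊗n}, Ω_n)` where `Ω_n = diag(1, ω_{n+1}, …, ω_{n+1}^{2^n − 1})`,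
`ω_{n+1} = exp(2πi/2^{n+1})`. -/
noncomputable def Dmat (n : ℕ) : Matrix (Fin (2 ^ (n + 1))) (Fin (2 ^ (n + 1))) ℂ :=
  Matrix.diagonal fun i =>
    if i.val < 2 ^ n then 1
    else Complex.exp (2 * Real.pi * Complex.I * ((i.val - 2 ^ n : ℕ)) / (2 ^ (n + 1)))

/-- The cyclic qubit permutation `Q_n = χ_{n−1}^n ⋯ χ_2^n χ_1^n`, which sends the
basis state with bits `b₁…b_n` to the one with bits `b_n b₁ … b_{n−1}`
(as a matrix: `Q e_ℓ = e_{ℓ/2 + (ℓ mod 2)·2^{n−1}}`). -/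
noncomputable def Qperm (n : ℕ) : Matrix (Fin (2 ^ n)) (Fin (2 ^ n)) ℂ :=
  Matrix.of fun k l => if k.val = l.val / 2 + l.val % 2 * 2 ^ (n - 1) then 1 else 0

/-- Reindexing `Fin 2 × Fin (2^n) ≃ Fin (2^(n+1))` (first factor = qubit 1 = most
significant bit). -/
def qubitSplit (n : ℕ) : Fin 2 × Fin (2 ^ n) ≃ Fin (2 ^ (n + 1)) :=
  finProdFinEquiv.trans (finCongr (by rw [pow_succ, Nat.mul_comm]))

/-- `σ_{1z} = σ_z ⊗ I^{⊗(n−1)}`: qubit 1 is the most significant bit. -/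
noncomputable def sigma1Z (n : ℕ) : Matrix (Fin (2 ^ n)) (Fin (2 ^ n)) ℂ :=
  Matrix.diagonal fun i => if i.val < 2 ^ (n - 1) then 1 else -1

/-- `σ_{nz} = I^{⊗(n-1)} ⊗ σ_z`: qubit `n` is the least significant bit. -/
noncomputable def sigmaNZ (n : ℕ) : Matrix (Fin (2 ^ n)) (Fin (2 ^ n)) ℂ :=
  Matrix.diagonal fun i => if i.val % 2 = 0 then 1 else -1

open Complex Real in
lemma case00 (n b m : ℕ) :
    Complex.exp (2 * π * I * ((b : ℂ) * (2 * m)) / 2 ^ (n + 1))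
      = Complex.exp (2 * π * I * ((b : ℂ) * m) / 2 ^ n) := by
  have h2n : (2 : ℂ) ^ n ≠ 0 := pow_ne_zero _ two_ne_zero
  congr 1
  rw [pow_succ]
  field_simp

open Complex Real in
lemma case01 (n b m : ℕ) :
    Complex.exp (2 * π * I * ((b : ℂ) * (2 * m + 1)) / 2 ^ (n + 1))
      = Complex.exp (2 * π * I * (b : ℂ) / 2 ^ (n + 1)) *
        Complex.exp (2 * π * I * ((b : ℂ) * m) / 2 ^ n) := by
  have h2n : (2 : ℂ) ^ n ≠ 0 := pow_ne_zero _ two_ne_zero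
  rw [← Complex.exp_add]
  congr 1
  rw [pow_succ]
  field_simp
  ring

open Complex Real in
lemma case10 (n b m : ℕ) :
    Complex.exp (2 * π * I * (((b : ℂ) + 2 ^ n) * (2 * m)) / 2 ^ (n + 1))
      = Complex.exp (2 * π * I * ((b : ℂ) * m) / 2 ^ n) := by
  have h2n : (2 : ℂ) ^ n ≠ 0 := pow_ne_zero _ two_ne_zero
  have h1 : 2 * (π : ℂ) * I * (((b : ℂ) + 2 ^ n) * (2 * m)) / 2 ^ (n + 1)
      = 2 * π * I * ((b : ℂ) * m) / 2 ^ n + (m : ℤ) * (2 * π * I) := by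
    rw [pow_succ]
    push_cast
    field_simp
    try ring
  rw [h1, Complex.exp_add, Complex.exp_int_mul_two_pi_mul_I, mul_one]

open Complex Real in
lemma case11 (n b m : ℕ) :
    Complex.exp (2 * π * I * (((b : ℂ) + 2 ^ n) * (2 * m + 1)) / 2 ^ (n + 1))
      = -(Complex.exp (2 * π * I * (b : ℂ) / 2 ^ (n + 1)) *
          Complex.exp (2 * π * I * ((b : ℂ) * m) / 2 ^ n)) := by
  have h2n : (2 : ℂ) ^ n ≠ 0 := pow_ne_zero _ two_ne_zero
  have h1 : 2 * (π : ℂ) * I * (((b : ℂ) + 2 ^ n) * (2 * m + 1)) / 2 ^ (n + 1)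
      = (2 * π * I * (b : ℂ) / 2 ^ (n + 1) + 2 * π * I * ((b : ℂ) * m) / 2 ^ n)
        + ((m : ℤ) * (2 * π * I) + π * I) := by
    rw [pow_succ]
    push_cast
    field_simp
    try ring
  rw [h1, Complex.exp_add, Complex.exp_add, Complex.exp_add,
    Complex.exp_int_mul_two_pi_mul_I, Complex.exp_pi_mul_I]
  ring

/-- The QFT recursion `F_{n+1} = H₁ · D_{n+1} · (I₂ ⊗ F_n) · Q_{n+1}`, where
`H₁ = H ⊗ I^{⊗ n}` and `D_{n+1} = diag(I^{⊗ n}, Ω_n)`. -/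
theorem stmt_13 (n : ℕ) :
    qft (n + 1)
      = Matrix.reindex (qubitSplit n) (qubitSplit n)
          (Hgate ⊗ₖ (1 : Matrix (Fin (2 ^ n)) (Fin (2 ^ n)) ℂ)) *
        Dmat n *
        Matrix.reindex (qubitSplit n) (qubitSplit n)
          ((1 : Matrix (Fin 2) (Fin 2) ℂ) ⊗ₖ qft n) *
        Qperm (n + 1) := by
  have hN : (0:ℕ) < 2 ^ n := by positivity
  have h2N : (2:ℕ) ^ (n+1) = 2 * 2 ^ n := by rw [pow_succ]; ring
  ext j l
  have hl2 : l.val / 2 < 2 ^ n := by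
    have := l.isLt
    omega
  have hlt : l.val / 2 + l.val % 2 * 2 ^ (n + 1 - 1) < 2 ^ (n + 1) := by
    have h2 : l.val % 2 ≤ 1 := by omega
    simp only [Nat.add_sub_cancel]
    nlinarith
  set k0 : Fin (2 ^ (n+1)) := ⟨l.val / 2 + l.val % 2 * 2 ^ (n + 1 - 1), hlt⟩ with hk0
  have hQ : ∀ k : Fin (2 ^ (n+1)), Qperm (n+1) k l = if k = k0 then 1 else 0 := by
    intro k
    simp only [Qperm, Matrix.of_apply, hk0, Fin.ext_iff]
  rw [Matrix.mul_apply]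
  simp only [hQ, mul_ite, mul_one, mul_zero, Finset.sum_ite_eq', Finset.mem_univ, if_true]
  rw [Matrix.mul_apply]
  simp only [Dmat, Matrix.mul_diagonal]
  rw [← Equiv.sum_comp (qubitSplit n)]
  simp only [Matrix.reindex_apply, Matrix.submatrix_apply, Equiv.symm_apply_apply,
    Matrix.kroneckerMap_apply, Matrix.one_apply]
  rw [Fintype.sum_prod_type]
  simp only [mul_ite, ite_mul, mul_zero, zero_mul, mul_one, one_mul]
  rw [Finset.sum_eq_single (((qubitSplit n).symm k0).1)
    (fun b _ hb => by simp [if_neg hb]) (by simp)]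
  rw [Finset.sum_eq_single (((qubitSplit n).symm j).2)
    (fun b _ hb => by simp only [if_neg (Ne.symm hb), ite_self]) (by simp)]
  simp only [if_pos rfl, if_true]
  have hv1 : ∀ k : Fin (2 ^ (n+1)), ((((qubitSplit n).symm k).1) : ℕ) = k.val / 2 ^ n := fun k => by
    simp [qubitSplit, finProdFinEquiv, Fin.divNat]
  have hv2 : ∀ k : Fin (2 ^ (n+1)), ((((qubitSplit n).symm k).2) : ℕ) = k.val % 2 ^ n := fun k => by
    simp [qubitSplit, finProdFinEquiv, Fin.modNat]
  have hv3 : ∀ (x : Fin 2) (y : Fin (2 ^ n)), (((qubitSplit n) (x, y)) : ℕ) = y.val + 2 ^ n * x.val :=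
    fun x y => by simp [qubitSplit, finProdFinEquiv]
  have hk0v : (k0 : ℕ) = l.val / 2 + l.val % 2 * 2 ^ n := by simp [hk0]
  have hC : ((((qubitSplit n).symm k0).1) : ℕ) = l.val % 2 := by
    rw [hv1, hk0v, Nat.add_mul_div_right _ _ hN, Nat.div_eq_of_lt hl2, Nat.zero_add]
  have hD : ((((qubitSplit n).symm k0).2) : ℕ) = l.val / 2 := by
    rw [hv2, hk0v, Nat.add_mul_mod_self_right, Nat.mod_eq_of_lt hl2]
  have hA := hv1 j
  have hB := hv2 j
  simp only [qft, Matrix.of_apply, hv3, hB, hC, hD]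
  have hb : j.val % 2 ^ n < 2 ^ n := Nat.mod_lt _ hN
  have ha2 : j.val / 2 ^ n = 0 ∨ j.val / 2 ^ n = 1 := by
    have h := j.isLt
    have : j.val / 2 ^ n < 2 := by rw [Nat.div_lt_iff_lt_mul hN]; omega
    omega
  have hr2 : l.val % 2 = 0 ∨ l.val % 2 = 1 := by omega
  have hjn : j.val = 2 ^ n * (j.val / 2 ^ n) + j.val % 2 ^ n := (Nat.div_add_mod _ _).symm
  have hln : l.val = 2 * (l.val / 2) + l.val % 2 := (Nat.div_add_mod _ _).symm
  have hsq : ((Real.sqrt (2 ^ (n + 1)) : ℝ) : ℂ)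
      = ((Real.sqrt 2 : ℝ) : ℂ) * ((Real.sqrt (2 ^ n) : ℝ) : ℂ) := by
    rw [pow_succ', Real.sqrt_mul (by norm_num)]
    push_cast
    ring
  have hs2 : ((Real.sqrt 2 : ℝ) : ℂ) ≠ 0 := by
    simp [Real.sqrt_eq_zero']
  have hsn : ((Real.sqrt (2 ^ n) : ℝ) : ℂ) ≠ 0 := by
    simp [Real.sqrt_eq_zero']
    try positivity
  rcases ha2 with ha | ha <;> rw [ha] at hjn <;> rcases hr2 with hr | hr <;> rw [hr] at hln
  · -- a = 0, r = 0
    have e1 : ((qubitSplit n).symm j).1 = 0 := Fin.ext (by simp [hA, ha])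
    have e2 : ((qubitSplit n).symm k0).1 = 0 := Fin.ext (by simp [hC, hr])
    have hjc : ((j.val : ℕ) : ℂ) = ((j.val % 2 ^ n : ℕ) : ℂ) := by
      norm_cast
      try omega
    have hlc : ((l.val : ℕ) : ℂ) = 2 * ((l.val / 2 : ℕ) : ℂ) := by
      rw [show (2 : ℂ) * ((l.val / 2 : ℕ) : ℂ) = ((2 * (l.val / 2) : ℕ) : ℂ) by push_cast; ring]
      norm_cast
      try omega
    rw [hr, e1, e2, hjc, hlc, if_pos (by omega), case00, hsq]
    have hH : Hgate 0 0 = ((Real.sqrt 2 : ℝ) : ℂ)⁻¹ := by simp [Hgate]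
    rw [hH]
    field_simp
  · -- a = 0, r = 1
    have e1 : ((qubitSplit n).symm j).1 = 0 := Fin.ext (by simp [hA, ha])
    have e2 : ((qubitSplit n).symm k0).1 = 1 := Fin.ext (by simp [hC, hr])
    have hjc : ((j.val : ℕ) : ℂ) = ((j.val % 2 ^ n : ℕ) : ℂ) := by
      norm_cast
      try omega
    have hlc : ((l.val : ℕ) : ℂ) = 2 * ((l.val / 2 : ℕ) : ℂ) + 1 := by
      rw [show (2 : ℂ) * ((l.val / 2 : ℕ) : ℂ) + 1 = ((2 * (l.val / 2) + 1 : ℕ) : ℂ) by push_cast; ring]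
      norm_cast
      try omega
    have hsub : j.val % 2 ^ n + 2 ^ n * 1 - 2 ^ n = j.val % 2 ^ n := by omega
    rw [hr, e1, e2, hjc, hlc, if_neg (by omega), hsub, case01, hsq]
    have hH : Hgate 0 1 = ((Real.sqrt 2 : ℝ) : ℂ)⁻¹ := by simp [Hgate]
    rw [hH]
    field_simp
    try ring
  · -- a = 1, r = 0
    have e1 : ((qubitSplit n).symm j).1 = 1 := Fin.ext (by simp [hA, ha])
    have e2 : ((qubitSplit n).symm k0).1 = 0 := Fin.ext (by simp [hC, hr])
    have hjc : ((j.val : ℕ) : ℂ) = ((j.val % 2 ^ n : ℕ) : ℂ) + 2 ^ n := by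
      rw [show ((j.val % 2 ^ n : ℕ) : ℂ) + 2 ^ n = ((j.val % 2 ^ n + 2 ^ n : ℕ) : ℂ) by push_cast; ring]
      norm_cast
      try omega
    have hlc : ((l.val : ℕ) : ℂ) = 2 * ((l.val / 2 : ℕ) : ℂ) := by
      rw [show (2 : ℂ) * ((l.val / 2 : ℕ) : ℂ) = ((2 * (l.val / 2) : ℕ) : ℂ) by push_cast; ring]
      norm_cast
      try omega
    rw [hr, e1, e2, hjc, hlc, if_pos (by omega), case10, hsq]
    have hH : Hgate 1 0 = ((Real.sqrt 2 : ℝ) : ℂ)⁻¹ := by simp [Hgate]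
    rw [hH]
    field_simp
  · -- a = 1, r = 1
    have e1 : ((qubitSplit n).symm j).1 = 1 := Fin.ext (by simp [hA, ha])
    have e2 : ((qubitSplit n).symm k0).1 = 1 := Fin.ext (by simp [hC, hr])
    have hjc : ((j.val : ℕ) : ℂ) = ((j.val % 2 ^ n : ℕ) : ℂ) + 2 ^ n := by
      rw [show ((j.val % 2 ^ n : ℕ) : ℂ) + 2 ^ n = ((j.val % 2 ^ n + 2 ^ n : ℕ) : ℂ) by push_cast; ring]
      norm_cast
      try omega
    have hlc : ((l.val : ℕ) : ℂ) = 2 * ((l.val / 2 : ℕ) : ℂ) + 1 := by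
      rw [show (2 : ℂ) * ((l.val / 2 : ℕ) : ℂ) + 1 = ((2 * (l.val / 2) + 1 : ℕ) : ℂ) by push_cast; ring]
      norm_cast
      try omega
    have hsub : j.val % 2 ^ n + 2 ^ n * 1 - 2 ^ n = j.val % 2 ^ n := by omega
    rw [hr, e1, e2, hjc, hlc, if_neg (by omega), hsub, case11, hsq]
    have hH : Hgate 1 1 = -((Real.sqrt 2 : ℝ) : ℂ)⁻¹ := by simp [Hgate]
    rw [hH]
    field_simp
    try ring
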